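/- For all natural numbers n, the sum over k from 0 to n of C(n,k)²·H_k·H_{n-k} equals C(2n, n)·[(H^{(2)}_n - H^{(2)}_{2n}) + (2H_n - H_{2n})²]. -/

import Mathlib

open Finset BigOperators

def H (n : ℕ) : ℚ := ∑ i ∈ Finset.range n, 1 / (i + 1 : ℚ)

def H2 (n : ℕ) : ℚ := ∑ i ∈ Finset.range n, 1 / ((i + 1 : ℚ))^2

open Polynomial

noncomputable def PP (k : ℕ) : ℚ[X] := ∏ i ∈ Finset.range k, (X - C (i : ℚ))

noncomputable def BB (k : ℕ) : ℚ[X] := C ((k.factorial : ℚ)⁻¹) * PP k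

lemma eval_PP (k : ℕ) (t : ℚ) : (PP k).eval t = ∏ i ∈ range k, (t - i) := by
  simp [PP, eval_prod]

lemma evalD_PP (k : ℕ) (t : ℚ) (h : ∀ i ∈ range k, t - (i : ℚ) ≠ 0) :
    (derivative (PP k)).eval t
      = (∏ i ∈ range k, (t - i)) * ∑ i ∈ range k, (t - (i:ℚ))⁻¹ := by
  induction k with
  | zero => simp [PP]
  | succ k ih =>
    have hk : t - (k:ℚ) ≠ 0 := h k (by simp)
    have h' : ∀ i ∈ range k, t - (i : ℚ) ≠ 0 := fun i hi => h i (by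
      simp at hi ⊢; omega)
    have : PP (k+1) = PP k * (X - C (k:ℚ)) := by
      simp [PP, prod_range_succ]
    rw [this, derivative_mul]
    simp only [eval_add, eval_mul, derivative_sub, derivative_X, derivative_C, sub_zero,
      eval_sub, eval_X, eval_C, eval_one, mul_one, ih h', eval_PP]
    rw [prod_range_succ, sum_range_succ]
    field_simp

lemma evalDD_PP (k : ℕ) (t : ℚ) (h : ∀ i ∈ range k, t - (i : ℚ) ≠ 0) :
    (derivative (derivative (PP k))).eval t
      = (∏ i ∈ range k, (t - i)) *
        ((∑ i ∈ range k, (t - (i:ℚ))⁻¹)^2 - ∑ i ∈ range k, ((t - (i:ℚ))⁻¹)^2) := by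
  induction k with
  | zero => simp [PP]
  | succ k ih =>
    have hk : t - (k:ℚ) ≠ 0 := h k (by simp)
    have h' : ∀ i ∈ range k, t - (i : ℚ) ≠ 0 := fun i hi => h i (by
      simp at hi ⊢; omega)
    have hP : PP (k+1) = PP k * (X - C (k:ℚ)) := by
      simp [PP, prod_range_succ]
    rw [hP, derivative_mul, derivative_add, derivative_mul]
    simp only [derivative_sub, derivative_X, derivative_C, sub_zero, mul_one, eval_add, eval_mul,
      eval_sub, eval_X, eval_C, ih h', evalD_PP k t h']
    rw [prod_range_succ, sum_range_succ, sum_range_succ]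
    field_simp
    ring

lemma prod_cast (m k : ℕ) :
    ∏ i ∈ range k, ((m:ℚ) - i) = (m.descFactorial k : ℚ) := by
  by_cases hmk : k ≤ m
  · rw [Nat.descFactorial_eq_prod_range]
    push_cast
    refine prod_congr rfl fun i hi => ?_
    have : i ≤ m := by simp at hi; omega
    push_cast [Nat.cast_sub this]
    ring
  · have h1 : m ∈ range k := by simp; omega
    rw [prod_eq_zero h1 (by simp), Nat.descFactorial_eq_zero_iff_lt.mpr (by omega)]
    simp

lemma eval_BB (k m : ℕ) : (BB k).eval (m : ℚ) = (m.choose k : ℚ) := by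
  simp only [BB, eval_mul, eval_C, eval_PP, prod_cast,
    Nat.descFactorial_eq_factorial_mul_choose]
  push_cast
  rw [← mul_assoc, inv_mul_cancel₀ (by exact_mod_cast k.factorial_ne_zero), one_mul]

lemma nat_ext (P Q : ℚ[X]) (h : ∀ m : ℕ, P.eval (m:ℚ) = Q.eval (m:ℚ)) : P = Q := by
  apply eq_of_infinite_eval_eq
  exact Set.infinite_of_injective_forall_mem (f := (Nat.cast : ℕ → ℚ))
    Nat.cast_injective fun m => h m

lemma harm1 (n : ℕ) : ∀ k, k ≤ n → ∑ i ∈ range k, ((n:ℚ) - i)⁻¹ = H n - H (n - k) := by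
  intro k
  induction k with
  | zero => simp
  | succ k ih =>
    intro hk
    rw [sum_range_succ, ih (by omega)]
    have h1 : n - k = (n - (k+1)) + 1 := by omega
    have h2 : ((n - (k+1) : ℕ) : ℚ) + 1 = (n:ℚ) - k := by
      have : ((n - (k+1) : ℕ) : ℚ) = (n:ℚ) - (k+1) := by
        push_cast [Nat.cast_sub hk]; ring
      rw [this]; ring
    rw [h1]
    simp only [H, sum_range_succ]
    rw [h2]
    ring

lemma harm2 (n : ℕ) : ∀ k, k ≤ n → ∑ i ∈ range k, (((n:ℚ) - i)⁻¹)^2 = H2 n - H2 (n - k) := by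
  intro k
  induction k with
  | zero => simp
  | succ k ih =>
    intro hk
    rw [sum_range_succ, ih (by omega)]
    have h1 : n - k = (n - (k+1)) + 1 := by omega
    have h2 : ((n - (k+1) : ℕ) : ℚ) + 1 = (n:ℚ) - k := by
      have : ((n - (k+1) : ℕ) : ℚ) = (n:ℚ) - (k+1) := by
        push_cast [Nat.cast_sub hk]; ring
      rw [this]; ring
    rw [h1]
    simp only [H2, sum_range_succ]
    rw [h2]
    rw [one_div, ← inv_pow]
    ring

lemma sub_ne (n : ℕ) (k : ℕ) (hk : k ≤ n) : ∀ i ∈ range k, (n:ℚ) - i ≠ 0 := by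
  intro i hi
  simp at hi
  have : (i:ℚ) < n := by exact_mod_cast (by omega : i < n)
  intro hcon
  linarith

lemma evalD_BB (n k : ℕ) (hk : k ≤ n) :
    (derivative (BB k)).eval (n : ℚ) = (n.choose k : ℚ) * (H n - H (n - k)) := by
  have hC : ((k.factorial : ℚ)⁻¹) * ∏ i ∈ range k, ((n:ℚ) - i) = (n.choose k : ℚ) := by
    rw [prod_cast, Nat.descFactorial_eq_factorial_mul_choose]
    push_cast
    rw [← mul_assoc, inv_mul_cancel₀ (by exact_mod_cast k.factorial_ne_zero), one_mul]
  rw [BB, derivative_C_mul, eval_mul, eval_C, evalD_PP k _ (sub_ne n k hk),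
    harm1 n k hk, ← mul_assoc, hC]

lemma evalDD_BB (n : ℕ) :
    (derivative (derivative (BB n))).eval (((2*n : ℕ)) : ℚ)
      = ((2*n).choose n : ℚ) * ((H (2*n) - H n)^2 - (H2 (2*n) - H2 n)) := by
  have hn : n ≤ 2*n := by omega
  have hC : ((n.factorial : ℚ)⁻¹) * ∏ i ∈ range n, (((2*n:ℕ):ℚ) - i) = ((2*n).choose n : ℚ) := by
    rw [prod_cast, Nat.descFactorial_eq_factorial_mul_choose]
    push_cast
    rw [← mul_assoc, inv_mul_cancel₀ (by exact_mod_cast n.factorial_ne_zero), one_mul]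
  have hsub : 2*n - n = n := by omega
  rw [BB, derivative_C_mul, derivative_C_mul, eval_mul, eval_C,
    evalDD_PP n _ (sub_ne (2*n) n hn), harm1 (2*n) n hn, harm2 (2*n) n hn, hsub,
    ← mul_assoc, hC]

lemma vand (x m n : ℕ) :
    ((x + m).choose n : ℚ) = ∑ k ∈ range (n+1), (x.choose k : ℚ) * (m.choose (n-k) : ℚ) := by
  rw [Nat.add_choose_eq, Finset.Nat.sum_antidiagonal_eq_sum_range_succ_mk]
  push_cast
  rfl

lemma I1 (n m : ℕ) :
    ∑ k ∈ range (n+1), C ((m.choose (n-k) : ℚ)) * BB k = (BB n).comp (X + C (m:ℚ)) := by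
  apply nat_ext
  intro x
  rw [eval_finset_sum, eval_comp]
  simp only [eval_mul, eval_C, eval_add, eval_X, eval_BB]
  have : ((x:ℚ) + m) = ((x + m : ℕ) : ℚ) := by push_cast; ring
  rw [this, eval_BB, vand]
  exact Finset.sum_congr rfl fun k _ => by ring

lemma A1 (n m : ℕ) :
    ∑ k ∈ range (n+1), (m.choose (n-k) : ℚ) * (derivative (BB k)).eval (n:ℚ)
      = (derivative (BB n)).eval ((n:ℚ) + m) := by
  have h := congrArg derivative (I1 n m)
  rw [derivative_sum, derivative_comp] at h
  simp only [derivative_C_mul, derivative_add, derivative_X, derivative_C, add_zero,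
    one_mul] at h
  have h2 := congrArg (Polynomial.eval (n:ℚ)) h
  rw [eval_finset_sum, eval_comp] at h2
  simpa using h2

lemma I2 (n : ℕ) :
    ∑ k ∈ range (n+1), C ((derivative (BB k)).eval (n:ℚ)) * BB (n-k)
      = (derivative (BB n)).comp (X + C (n:ℚ)) := by
  apply nat_ext
  intro m
  rw [eval_finset_sum, eval_comp]
  simp only [eval_mul, eval_C, eval_add, eval_X, eval_BB]
  have h := A1 n m
  rw [add_comm (n:ℚ) (m:ℚ)] at h
  rw [← h]
  exact Finset.sum_congr rfl fun k _ => by ring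

lemma A2 (n : ℕ) :
    ∑ k ∈ range (n+1), (derivative (BB k)).eval (n:ℚ) * (derivative (BB (n-k))).eval (n:ℚ)
      = (derivative (derivative (BB n))).eval ((n:ℚ) + n) := by
  have h := congrArg derivative (I2 n)
  rw [derivative_sum, derivative_comp] at h
  simp only [derivative_C_mul, derivative_add, derivative_X, derivative_C, add_zero,
    one_mul] at h
  have h2 := congrArg (Polynomial.eval (n:ℚ)) h
  rw [eval_finset_sum, eval_comp] at h2
  simpa using h2

theorem stmt14 (n : ℕ) :
    ∑ k ∈ Finset.range (n + 1), (n.choose k : ℚ)^2 * H k * H (n - k)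
      = ((2 * n).choose n : ℚ)
          * ((H2 n - H2 (2 * n)) + (2 * H n - H (2 * n))^2) := by
  have hcast : ((n:ℚ) + n) = ((2*n : ℕ) : ℚ) := by push_cast; ring
  -- F2 : mixed derivative identity
  have F2 : ∑ k ∈ range (n+1),
      (n.choose k : ℚ)^2 * (H n - H (n-k)) * (H n - H k)
      = ((2*n).choose n : ℚ) * ((H (2*n) - H n)^2 - (H2 (2*n) - H2 n)) := by
    have h := A2 n
    rw [hcast, evalDD_BB] at h
    rw [← h]
    refine Finset.sum_congr rfl fun k hk => ?_
    simp only [mem_range] at hk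
    have hk' : k ≤ n := by omega
    rw [evalD_BB n k hk', evalD_BB n (n-k) (by omega), Nat.choose_symm hk',
      (by omega : n - (n - k) = k)]
    ring
  -- F1 : first derivative identity
  have F1 : ∑ k ∈ range (n+1), (n.choose k : ℚ)^2 * (H n - H (n-k))
      = ((2*n).choose n : ℚ) * (H (2*n) - H n) := by
    have h := A1 n n
    rw [hcast, evalD_BB (2*n) n (by omega), (by omega : 2*n - n = n)] at h
    rw [← h]
    refine Finset.sum_congr rfl fun k hk => ?_
    simp only [mem_range] at hk
    have hk' : k ≤ n := by omega
    rw [evalD_BB n k hk', Nat.choose_symm hk']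
    ring
  -- F1' : reflected version
  have F1' : ∑ k ∈ range (n+1), (n.choose k : ℚ)^2 * (H n - H k)
      = ((2*n).choose n : ℚ) * (H (2*n) - H n) := by
    rw [← F1, ← Finset.sum_range_reflect]
    refine Finset.sum_congr rfl fun k hk => ?_
    simp only [mem_range] at hk
    have hk' : k ≤ n := by omega
    rw [(by omega : n + 1 - 1 - k = n - k), Nat.choose_symm hk']
  -- F0 : sum of squares of binomials
  have F0 : ∑ k ∈ range (n+1), (n.choose k : ℚ)^2 = ((2*n).choose n : ℚ) := by
    have h := vand n n n
    rw [(by omega : n + n = 2*n)] at h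
    rw [h]
    refine Finset.sum_congr rfl fun k hk => ?_
    simp only [mem_range] at hk
    rw [Nat.choose_symm (by omega : k ≤ n)]
    ring
  have key : ∀ k ∈ range (n+1),
      (n.choose k : ℚ)^2 * H k * H (n-k)
        = (n.choose k : ℚ)^2 * (H n - H (n-k)) * (H n - H k)
          + H n * H n * (n.choose k : ℚ)^2
          - H n * ((n.choose k : ℚ)^2 * (H n - H k))
          - H n * ((n.choose k : ℚ)^2 * (H n - H (n-k))) := fun k _ => by ring
  rw [Finset.sum_congr rfl key]
  simp only [Finset.sum_add_distrib, Finset.sum_sub_distrib, ← Finset.mul_sum]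
  rw [F2, F1, F1', F0]
  ring
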